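/- Let p ∈ ℂⁿ, q† a row vector with q†p ≠ 0, z₀, ζ₀ ∈ ℂ with z* ≠ z₀ and z* ≠ ζ₀, and B = I + ((z₀ − ζ₀)/(z* − z₀))·(p q†)/(q†p). If w is a column vector with q†w ≠ 0 and v = B·w, then q†v ≠ 0 and (z* − z₀)·w/(q†w) + (z₀ − ζ₀)·p/(q†p) + (ζ₀ − z*)·v/(q†v) = 0; that is, (w, p, v) form a q†-based triple with parameters (z* − z₀, z₀ − ζ₀, ζ₀ − z*). Dually, if w† is a row vector with w†p ≠ 0 and v† = w†·B, then v†p ≠ 0 and (z* − z₀)·w†/(w†p) + (z₀ − ζ₀)·q†/(q†p) + (ζ₀ − z*)·v†/(v†p) = 0. -/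

import Mathlib

open Matrix

private lemma aux_mulVec (n : ℕ) (p q w : Fin n → ℂ) (c : ℂ) :
    (1 + c • vecMulVec p q).mulVec w = w + (c * (q ⬝ᵥ w)) • p := by
  funext i
  simp only [mulVec, vecMulVec_apply, dotProduct, Matrix.add_apply, Matrix.smul_apply,
    Matrix.one_apply, Pi.add_apply, Pi.smul_apply, smul_eq_mul, add_mul, ite_mul, one_mul,
    zero_mul, mul_ite, mul_one, mul_zero, Finset.sum_add_distrib, Finset.sum_ite_eq,
    Finset.mem_univ, if_true, Finset.mul_sum]
  rw [add_right_inj]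
  rw [Finset.sum_mul]; exact Finset.sum_congr rfl fun x _ => by ring

private lemma aux_vecMul (n : ℕ) (p q w : Fin n → ℂ) (c : ℂ) :
    Matrix.vecMul w (1 + c • vecMulVec p q) = w + (c * (w ⬝ᵥ p)) • q := by
  funext i
  simp only [vecMul, vecMulVec_apply, dotProduct, Matrix.add_apply, Matrix.smul_apply,
    Matrix.one_apply, Pi.add_apply, Pi.smul_apply, smul_eq_mul, add_mul, mul_add, ite_mul, one_mul,
    zero_mul, mul_ite, mul_one, mul_zero, Finset.sum_add_distrib, Finset.sum_ite_eq',
    Finset.mem_univ, if_true, Finset.mul_sum]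
  rw [add_right_inj]
  rw [Finset.sum_mul]; exact Finset.sum_congr rfl fun x _ => by ring

/-- If `v = B·w` then `(w, p, v)` form a `q†`-based triple with parameters
`(z* − z₀, z₀ − ζ₀, ζ₀ − z*)`; dually for row vectors. -/
theorem elementary_divisor_triple (n : ℕ) (p q : Fin n → ℂ) (hqp : q ⬝ᵥ p ≠ 0)
    (z₀ ζ₀ zs : ℂ) (hz : zs ≠ z₀) (hz' : zs ≠ ζ₀)
    (B : Matrix (Fin n) (Fin n) ℂ)
    (hB : B = 1 + (((z₀ - ζ₀) / (zs - z₀)) / (q ⬝ᵥ p)) • vecMulVec p q)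
    (w v : Fin n → ℂ) (hw : q ⬝ᵥ w ≠ 0) (hv : v = B.mulVec w)
    (wd vd : Fin n → ℂ) (hwd : wd ⬝ᵥ p ≠ 0) (hvd : vd = Matrix.vecMul wd B) :
    q ⬝ᵥ v ≠ 0 ∧
    (zs - z₀) • ((q ⬝ᵥ w)⁻¹ • w) + (z₀ - ζ₀) • ((q ⬝ᵥ p)⁻¹ • p) +
      (ζ₀ - zs) • ((q ⬝ᵥ v)⁻¹ • v) = 0 ∧
    vd ⬝ᵥ p ≠ 0 ∧
    (zs - z₀) • ((wd ⬝ᵥ p)⁻¹ • wd) + (z₀ - ζ₀) • ((q ⬝ᵥ p)⁻¹ • q) +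
      (ζ₀ - zs) • ((vd ⬝ᵥ p)⁻¹ • vd) = 0 := by
  have hz0 : zs - z₀ ≠ 0 := sub_ne_zero.mpr hz
  have hz1 : zs - ζ₀ ≠ 0 := sub_ne_zero.mpr hz'
  set c : ℂ := ((z₀ - ζ₀) / (zs - z₀)) / (q ⬝ᵥ p) with hc
  have hv' : v = w + (c * (q ⬝ᵥ w)) • p := by rw [hv, hB, aux_mulVec]
  have hvd' : vd = wd + (c * (wd ⬝ᵥ p)) • q := by rw [hvd, hB, aux_vecMul]
  have hqv : q ⬝ᵥ v = ((zs - ζ₀) / (zs - z₀)) * (q ⬝ᵥ w) := by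
    rw [hv', dotProduct_add, dotProduct_smul, smul_eq_mul, hc]
    field_simp
    ring
  have hvdp : vd ⬝ᵥ p = ((zs - ζ₀) / (zs - z₀)) * (wd ⬝ᵥ p) := by
    rw [hvd', add_dotProduct, smul_dotProduct, smul_eq_mul, hc]
    field_simp
    ring
  have hqv0 : q ⬝ᵥ v ≠ 0 := by
    rw [hqv]; exact mul_ne_zero (div_ne_zero hz1 hz0) hw
  have hvdp0 : vd ⬝ᵥ p ≠ 0 := by
    rw [hvdp]; exact mul_ne_zero (div_ne_zero hz1 hz0) hwd
  refine ⟨hqv0, ?_, hvdp0, ?_⟩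
  · have e1 : (ζ₀ - zs) * (q ⬝ᵥ v)⁻¹ = -((zs - z₀) * (q ⬝ᵥ w)⁻¹) := by
      rw [hqv]
      field_simp
      ring
    have e2 : (zs - z₀) * (q ⬝ᵥ w)⁻¹ * (c * (q ⬝ᵥ w)) = (z₀ - ζ₀) * (q ⬝ᵥ p)⁻¹ := by
      rw [hc]
      field_simp
    rw [smul_smul, smul_smul, smul_smul, e1, hv', neg_smul, smul_add, smul_smul, e2]
    abel
  · have e1 : (ζ₀ - zs) * (vd ⬝ᵥ p)⁻¹ = -((zs - z₀) * (wd ⬝ᵥ p)⁻¹) := by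
      rw [hvdp]
      field_simp
      ring
    have e2 : (zs - z₀) * (wd ⬝ᵥ p)⁻¹ * (c * (wd ⬝ᵥ p)) = (z₀ - ζ₀) * (q ⬝ᵥ p)⁻¹ := by
      rw [hc]
      field_simp
    rw [smul_smul, smul_smul, smul_smul, e1, hvd', neg_smul, smul_add, smul_smul, e2]
    abel
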